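/- arXiv:1909.05817 — 4 statements merged into one kernel-verified Lean document; each statement's English description precedes it below -/
import Mathlib

section
/- Let (X,μ) be a probability space and (Eₙ) a sequence of measurable sets with ∑ₙ μ(Eₙ) = ∞. Suppose there is a constant C > 0 such that for all N ≥ M ≥ 1, ∑_{m,n=M}^{N} (μ(Eₘ ∩ Eₙ) − μ(Eₘ)μ(Eₙ)) ≤ C ∑_{n=M}^{N} μ(Eₙ). Then the set {x : x ∈ Eₙ for infinitely many n} has full μ-measure. -/
open MeasureTheory Filter ProbabilityTheory

theorem stmt_2 {X : Type*} [MeasurableSpace X] (μ : Measure X) [IsProbabilityMeasure μ]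
    (E : ℕ → Set X) (hE : ∀ n, MeasurableSet (E n))
    (hdiv : ∑' n, μ (E n) = ⊤)
    (C : ℝ) (hC : 0 < C)
    (hquasi : ∀ M N : ℕ, 1 ≤ M → M ≤ N →
      ∑ m ∈ Finset.Icc M N, ∑ n ∈ Finset.Icc M N,
        ((μ (E m ∩ E n)).toReal - (μ (E m)).toReal * (μ (E n)).toReal)
      ≤ C * ∑ n ∈ Finset.Icc M N, (μ (E n)).toReal) :
    μ {x | {n : ℕ | x ∈ E n}.Infinite} = 1 := by
  classical
  set a : ℕ → ℝ := fun n => (μ (E n)).toReal with ha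
  set S : ℕ → ℝ := fun N => ∑ n ∈ Finset.Icc 1 N, a n with hSdef
  set f : ℕ → X → ℝ :=
    fun N x => ∑ n ∈ Finset.Icc 1 N, (E n).indicator (fun _ => (1:ℝ)) x with hfdef
  -- basic facts
  have hind : ∀ n (x : X), (E n).indicator (fun _ => (1:ℝ)) x = if x ∈ E n then 1 else 0 := by
    intro n x; by_cases h : x ∈ E n <;> simp [h]
  have hmeas : ∀ N, Measurable (f N) := by
    intro N
    exact Finset.measurable_sum _ (fun n _ => measurable_const.indicator (hE n))
  have hintg : ∀ n, Integrable ((E n).indicator (fun _ => (1:ℝ))) μ :=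
    fun n => (integrable_const (1:ℝ)).indicator (hE n)
  have hfi : ∀ N, Integrable (f N) μ :=
    fun N => integrable_finset_sum _ (fun n _ => hintg n)
  have hfb : ∀ N x, |f N x| ≤ N := by
    intro N x
    have h1 : f N x ≤ ∑ n ∈ Finset.Icc 1 N, (1:ℝ) := by
      apply Finset.sum_le_sum
      intro n _; rw [hind]; split_ifs <;> norm_num
    have h0 : 0 ≤ f N x := by
      apply Finset.sum_nonneg
      intro n _; rw [hind]; split_ifs <;> norm_num
    rw [abs_of_nonneg h0]
    refine h1.trans ?_
    rw [Finset.sum_const, Nat.card_Icc]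
    simp
  have hmem : ∀ N, MemLp (f N) 2 μ := by
    intro N
    exact MemLp.of_bound (hmeas N).aestronglyMeasurable N
      (Filter.Eventually.of_forall (fun x => by rw [Real.norm_eq_abs]; exact hfb N x))
  have hintf : ∀ N, ∫ x, f N x ∂μ = S N := by
    intro N
    rw [hfdef]
    rw [integral_finset_sum _ (fun n _ => hintg n)]
    apply Finset.sum_congr rfl
    intro n _
    rw [integral_indicator_const _ (hE n)]; simp [ha, Measure.real]
  -- second moment
  have hsq : ∀ N, ∫ x, (f N x)^2 ∂μ
      = ∑ m ∈ Finset.Icc 1 N, ∑ n ∈ Finset.Icc 1 N, (μ (E m ∩ E n)).toReal := by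
    intro N
    have hpt : ∀ x, (f N x)^2 = ∑ m ∈ Finset.Icc 1 N, ∑ n ∈ Finset.Icc 1 N,
        (E m ∩ E n).indicator (fun _ => (1:ℝ)) x := by
      intro x
      rw [sq, hfdef]
      rw [Finset.sum_mul_sum]
      apply Finset.sum_congr rfl; intro m _
      apply Finset.sum_congr rfl; intro n _
      by_cases hm : x ∈ E m <;> by_cases hn : x ∈ E n <;>
        simp [Set.indicator, hm, hn, Set.mem_inter_iff]
    simp_rw [hpt]
    rw [integral_finset_sum _ (fun m _ => integrable_finset_sum _
      (fun n _ => (integrable_const (1:ℝ)).indicator ((hE m).inter (hE n))))]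
    apply Finset.sum_congr rfl; intro m _
    rw [integral_finset_sum _ (fun n _ => (integrable_const (1:ℝ)).indicator ((hE m).inter (hE n)))]
    apply Finset.sum_congr rfl; intro n _
    rw [integral_indicator_const _ ((hE m).inter (hE n))]; simp [Measure.real]
  -- variance bound
  have hvar : ∀ N, 1 ≤ N → variance (f N) μ ≤ C * S N := by
    intro N hN
    rw [variance_eq_sub (hmem N)]
    have h1 : μ[(f N) ^ 2] = ∑ m ∈ Finset.Icc 1 N, ∑ n ∈ Finset.Icc 1 N,
        (μ (E m ∩ E n)).toReal := by
      simp_rw [Pi.pow_apply]; exact hsq N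
    have h2 : μ[f N] = S N := hintf N
    rw [h1, h2]
    have h3 : S N ^ 2 = ∑ m ∈ Finset.Icc 1 N, ∑ n ∈ Finset.Icc 1 N, a m * a n := by
      rw [sq, hSdef, Finset.sum_mul_sum]
    rw [h3]
    rw [← Finset.sum_sub_distrib]
    simp_rw [← Finset.sum_sub_distrib]
    exact hquasi 1 N le_rfl hN
  -- divergence of S
  have hTne : ∀ N, (∑ n ∈ Finset.Icc 1 N, μ (E n)) ≠ ⊤ := by
    intro N
    exact (ENNReal.sum_lt_top.mpr (fun n _ => measure_lt_top μ _)).ne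
  have hST : ∀ N, S N = (∑ n ∈ Finset.Icc 1 N, μ (E n)).toReal := by
    intro N
    rw [ENNReal.toReal_sum (fun n _ => (measure_lt_top μ _).ne)]
  have hStop : Tendsto S atTop atTop := by
    rw [tendsto_atTop]
    intro b
    have htop : (⨆ s : Finset ℕ, ∑ n ∈ s, μ (E n)) = ⊤ := by
      rw [← ENNReal.tsum_eq_iSup_sum]; exact hdiv
    have hlt : ENNReal.ofReal b + μ (E 0) < ⨆ s : Finset ℕ, ∑ n ∈ s, μ (E n) := by
      rw [htop]
      exact ENNReal.add_lt_top.mpr ⟨ENNReal.ofReal_lt_top, measure_lt_top μ _⟩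
    obtain ⟨s, hs⟩ := lt_iSup_iff.mp hlt
    obtain ⟨M, hM⟩ : ∃ M, ∀ n ∈ s, n ≤ M := ⟨s.sup id, fun n hn => Finset.le_sup (f := id) hn⟩
    filter_upwards [eventually_ge_atTop M] with N hN
    have hsub : s ⊆ Finset.range (N + 1) := by
      intro n hn
      exact Finset.mem_range.mpr (Nat.lt_succ_of_le ((hM n hn).trans hN))
    have h4 : ∑ n ∈ s, μ (E n) ≤ ∑ n ∈ Finset.range (N+1), μ (E n) :=
      Finset.sum_le_sum_of_subset hsub
    have h5 : ∑ n ∈ Finset.range (N+1), μ (E n)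
        = μ (E 0) + ∑ n ∈ Finset.Icc 1 N, μ (E n) := by
      rw [Finset.sum_range_succ' (fun n => μ (E n)) N]
      have hIcc : ∑ n ∈ Finset.Icc 1 N, μ (E n) = ∑ i ∈ Finset.range N, μ (E (i + 1)) := by
        rw [← Finset.Ico_add_one_right_eq_Icc, Finset.sum_Ico_eq_sum_range]
        simp [add_comm]
      rw [hIcc, add_comm]
    have h6 : ENNReal.ofReal b + μ (E 0) < μ (E 0) + ∑ n ∈ Finset.Icc 1 N, μ (E n) :=
      lt_of_lt_of_le hs (h4.trans h5.le)
    rw [add_comm (ENNReal.ofReal b)] at h6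
    have h7 : ENNReal.ofReal b < ∑ n ∈ Finset.Icc 1 N, μ (E n) :=
      (ENNReal.add_lt_add_iff_left (measure_lt_top μ _).ne).mp h6
    rw [hST]
    exact ((ENNReal.ofReal_le_iff_le_toReal (hTne N)).mp h7.le)
  -- S is positive where big; choose subsequence
  have hNk : ∀ k : ℕ, ∃ N : ℕ, 1 ≤ N ∧ (((k:ℕ):ℝ)+1)^2 ≤ S N := by
    intro k
    have h1 := (tendsto_atTop.mp hStop (((k:ℝ)+1)^2)).and (eventually_ge_atTop 1)
    obtain ⟨N, hN1, hN2⟩ := h1.exists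
    exact ⟨N, hN2, hN1⟩
  set Nk : ℕ → ℕ := fun k => (hNk k).choose with hNkdef
  have hNk1 : ∀ k, 1 ≤ Nk k := fun k => (hNk k).choose_spec.1
  have hNk2 : ∀ k : ℕ, ((k:ℝ)+1)^2 ≤ S (Nk k) := fun k => (hNk k).choose_spec.2
  have hSpos : ∀ k : ℕ, 0 < S (Nk k) := by
    intro k
    refine lt_of_lt_of_le ?_ (hNk2 k)
    positivity
  -- Chebyshev bound for sets A k
  set A : ℕ → Set X := fun k => {x | S (Nk k) / 2 ≤ |f (Nk k) x - S (Nk k)|} with hAdef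
  have hcheb : ∀ k : ℕ, μ (A k) ≤ ENNReal.ofReal (4 * C / ((k:ℝ)+1)^2) := by
    intro k
    have hc : 0 < S (Nk k) / 2 := by linarith [hSpos k]
    have h1 := meas_ge_le_variance_div_sq (hmem (Nk k)) hc
    rw [hintf (Nk k)] at h1
    refine h1.trans (ENNReal.ofReal_le_ofReal ?_)
    have hs' := hSpos k
    have hv := hvar (Nk k) (hNk1 k)
    have h2 : variance (f (Nk k)) μ / (S (Nk k) / 2)^2 ≤ C * S (Nk k) / (S (Nk k) / 2)^2 := by
      gcongr
    refine h2.trans ?_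
    have h3 : C * S (Nk k) / (S (Nk k) / 2)^2 = 4 * C / S (Nk k) := by
      field_simp; ring
    rw [h3]
    exact div_le_div_of_nonneg_left (by positivity) (by positivity) (hNk2 k)
  -- Borel-Cantelli I
  have hsum : ∑' k, μ (A k) ≠ ⊤ := by
    have hsummable : Summable (fun k : ℕ => 4 * C / ((k:ℝ)+1)^2) := by
      have h1 := Real.summable_one_div_nat_pow.mpr (le_refl 2)
      have h2 := (summable_nat_add_iff 1).2 h1
      have h3 : Summable (fun k : ℕ => 1 / ((k:ℝ)+1)^2) := by
        simpa using h2
      simpa [div_eq_mul_inv, mul_assoc] using h3.mul_left (4 * C)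
    have h4 : ∑' (k : ℕ), μ (A k) ≤ ∑' (k : ℕ), ENNReal.ofReal (4 * C / ((k:ℝ)+1)^2) :=
      ENNReal.tsum_le_tsum hcheb
    have h5 : ∑' (k : ℕ), ENNReal.ofReal (4 * C / ((k:ℝ)+1)^2)
        = ENNReal.ofReal (∑' (k : ℕ), 4 * C / ((k:ℝ)+1)^2) :=
      (ENNReal.ofReal_tsum_of_nonneg (fun k => by positivity) hsummable).symm
    rw [h5] at h4
    exact (h4.trans_lt ENNReal.ofReal_lt_top).ne
  have hlimsup : μ (limsup A atTop) = 0 := measure_limsup_atTop_eq_zero hsum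
  have hae : ∀ᵐ x ∂μ, x ∉ limsup A atTop := measure_eq_zero_iff_ae_notMem.mp hlimsup
  -- conclusion a.e.
  have hae2 : ∀ᵐ x ∂μ, {n : ℕ | x ∈ E n}.Infinite := by
    filter_upwards [hae] with x hx
    rw [mem_limsup_iff_frequently_mem, not_frequently] at hx
    rw [eventually_atTop] at hx
    obtain ⟨K, hK⟩ := hx
    by_contra hfin
    rw [Set.not_infinite] at hfin
    -- f N x is bounded by card
    have hfcard : ∀ N, f N x ≤ (hfin.toFinset.card : ℝ) := by
      intro N
      have h1 : f N x = (((Finset.Icc 1 N).filter (fun n => x ∈ E n)).card : ℝ) := by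
        rw [hfdef]
        simp_rw [hind]
        rw [Finset.sum_boole]
      rw [h1]
      have h2 : (Finset.Icc 1 N).filter (fun n => x ∈ E n) ⊆ hfin.toFinset := by
        intro n hn
        rw [Set.Finite.mem_toFinset]
        exact (Finset.mem_filter.mp hn).2
      exact_mod_cast Finset.card_le_card h2
    set c := hfin.toFinset.card with hc
    set k := K + 2 * c + 1 with hk
    have hkK : K ≤ k := by omega
    have h3 := hK k hkK
    rw [hAdef, Set.mem_setOf_eq, not_le] at h3
    have h4 : S (Nk k) / 2 < f (Nk k) x := by
      cases abs_lt.mp h3 with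
      | intro h5 h6 => linarith
    have h5 : ((k:ℝ)+1)^2 / 2 ≤ S (Nk k) / 2 := by linarith [hNk2 k]
    have h6 : ((k:ℝ)+1) ≤ ((k:ℝ)+1)^2 := by nlinarith [Nat.cast_nonneg (α := ℝ) k]
    have h7 : (c : ℝ) + 1 ≤ ((k:ℝ)+1) / 2 := by
      rw [hk]; push_cast; linarith [Nat.cast_nonneg (α := ℝ) K]
    have := hfcard (Nk k)
    linarith
  -- from a.e. to measure one
  have hcompl : μ {x | {n : ℕ | x ∈ E n}.Infinite}ᶜ = 0 := by
    rw [measure_eq_zero_iff_ae_notMem]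
    filter_upwards [hae2] with x hx
    simp only [Set.mem_compl_iff, Set.mem_setOf_eq, not_not]
    exact hx
  refine le_antisymm prob_le_one ?_
  have h1 : (1 : ENNReal) = μ Set.univ := (measure_univ).symm
  rw [h1]
  calc μ Set.univ ≤ μ ({x | {n : ℕ | x ∈ E n}.Infinite} ∪ {x | {n : ℕ | x ∈ E n}.Infinite}ᶜ) := by
        rw [Set.union_compl_self]
    _ ≤ μ {x | {n : ℕ | x ∈ E n}.Infinite} + μ {x | {n : ℕ | x ∈ E n}.Infinite}ᶜ :=
        measure_union_le _ _
    _ = μ {x | {n : ℕ | x ∈ E n}.Infinite} := by rw [hcompl, add_zero]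
end

section
/- Let H be a Hilbert space, U: H → H a unitary operator, and f ∈ H. Suppose there exist constants D > 0 and σ > 0 such that |⟨Uⁱ f, f⟩| ≤ D‖f‖² · i·e^{−iσ} for all integers i ≥ 1. Then for β_n(f) = (1/n)∑_{j=1}^{n} U^{j} f one has ‖β_n(f)‖² ≤ (2/n)‖f‖²(1 + D∑_{i=1}^{∞} i e^{−iσ}), i.e. ‖β_n(f)‖ ≤ C‖f‖/√n for a constant C depending only on D and σ. -/
open Finset
theorem stmt_4 {H : Type*} [NormedAddCommGroup H] [InnerProductSpace ℂ H]
    (U : H ≃ₗᵢ[ℂ] H) (f : H) (D σ : ℝ) (hD : 0 < D) (hσ : 0 < σ)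
    (hcorr : ∀ i : ℕ, 1 ≤ i →
      ‖(inner ℂ ((U ^ i) f) f : ℂ)‖ ≤ D * ‖f‖ ^ 2 * ((i : ℝ) * Real.exp (-(i : ℝ) * σ))) :
    ∀ n : ℕ, 1 ≤ n →
      ‖(n : ℂ)⁻¹ • ∑ j ∈ Finset.Icc 1 n, (U ^ j) f‖ ^ 2
        ≤ (2 / (n : ℝ)) * ‖f‖ ^ 2 * (1 + D * ∑' i : ℕ, (i : ℝ) * Real.exp (-(i : ℝ) * σ)) := by
  intro n hn
  have hnpos : (0 : ℝ) < n := by exact_mod_cast hn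
  set T := ∑' i : ℕ, (i : ℝ) * Real.exp (-(i : ℝ) * σ) with hTdef
  have hsum : Summable (fun i : ℕ => (i : ℝ) * Real.exp (-(i : ℝ) * σ)) := by
    have := Real.summable_pow_mul_exp_neg_nat_mul 1 hσ
    simpa [pow_one, neg_mul, mul_comm σ] using this
  have hterm_nn : ∀ i : ℕ, 0 ≤ (i : ℝ) * Real.exp (-(i : ℝ) * σ) := fun i =>
    mul_nonneg (Nat.cast_nonneg i) (Real.exp_pos _).le
  have hTnn : 0 ≤ T := tsum_nonneg hterm_nn
  -- the inner-product key identity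
  have aux : ∀ j k : ℕ, k ≤ j →
      (inner ℂ ((U ^ j) f) ((U ^ k) f) : ℂ) = inner ℂ ((U ^ (j - k)) f) f := by
    intro j k h
    have h1 : U ^ j = U ^ k * U ^ (j - k) := by rw [← pow_add, Nat.add_sub_cancel' h]
    rw [h1, LinearIsometryEquiv.coe_mul, Function.comp_apply,
      LinearIsometryEquiv.inner_map_map]
  have key : ∀ j k : ℕ, ‖(inner ℂ ((U ^ j) f) ((U ^ k) f) : ℂ)‖
      = ‖(inner ℂ ((U ^ (Nat.dist j k)) f) f : ℂ)‖ := by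
    intro j k
    rcases le_total k j with h | h
    · rw [aux j k h, Nat.dist_eq_sub_of_le_right h]
    · rw [norm_inner_symm, aux k j h, Nat.dist_eq_sub_of_le h]
  -- pointwise bound
  set g : ℕ → ℝ := fun i =>
    if i = 0 then ‖f‖ ^ 2 else D * ‖f‖ ^ 2 * ((i : ℝ) * Real.exp (-(i : ℝ) * σ)) with hg
  have hgnn : ∀ i, 0 ≤ g i := by
    intro i
    simp only [hg]
    split
    · positivity
    · exact mul_nonneg (mul_nonneg hD.le (sq_nonneg _)) (hterm_nn i)
  have hbound : ∀ j k : ℕ, ‖(inner ℂ ((U ^ j) f) ((U ^ k) f) : ℂ)‖ ≤ g (Nat.dist j k) := by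
    intro j k
    rw [key]
    rcases Nat.eq_zero_or_pos (Nat.dist j k) with h | h
    · rw [h]
      simp only [hg, if_pos rfl, pow_zero]
      rw [show ((1 : H ≃ₗᵢ[ℂ] H) f) = f from rfl, inner_self_eq_norm_sq_to_K]
      simp [Complex.norm_real]
    · have := hcorr _ h
      simp only [hg, if_neg (Nat.pos_iff_ne_zero.mp h)]
      exact this
  -- sum over Icc 1 n of g i is at most T
  have hIcc : ∀ (s : Finset ℕ), (1 ∉ s → True) → True := fun _ _ => trivial
  have hsum_g : ∑ i ∈ Icc 1 n, g i ≤ D * ‖f‖ ^ 2 * T := by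
    have h1 : ∑ i ∈ Icc 1 n, g i
        = ∑ i ∈ Icc 1 n, D * ‖f‖ ^ 2 * ((i : ℝ) * Real.exp (-(i : ℝ) * σ)) := by
      refine Finset.sum_congr rfl fun i hi => ?_
      have : i ≠ 0 := by
        have := (Finset.mem_Icc.mp hi).1; omega
      simp [hg, this]
    rw [h1, ← Finset.mul_sum]
    have h2 : ∑ i ∈ Icc 1 n, ((i : ℝ) * Real.exp (-(i : ℝ) * σ)) ≤ T :=
      Summable.sum_le_tsum _ (fun i _ => hterm_nn i) hsum
    exact mul_le_mul_of_nonneg_left h2 (by positivity)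
  -- row bound
  have hrow : ∀ j ∈ Icc 1 n, ∑ k ∈ Icc 1 n, g (Nat.dist j k)
      ≤ ‖f‖ ^ 2 + 2 * (D * ‖f‖ ^ 2 * T) := by
    intro j hj
    obtain ⟨hj1, hjn⟩ := Finset.mem_Icc.mp hj
    rw [← Finset.sum_erase_add _ _ hj, Nat.dist_self]
    have hg0 : g 0 = ‖f‖ ^ 2 := by simp [hg]
    rw [hg0]
    have hsplit : ∑ k ∈ (Icc 1 n).erase j, g (Nat.dist j k)
        ≤ 2 * (D * ‖f‖ ^ 2 * T) := by
      rw [← Finset.sum_filter_add_sum_filter_not ((Icc 1 n).erase j) (· < j)]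
      have hA : ∑ k ∈ ((Icc 1 n).erase j).filter (· < j), g (Nat.dist j k)
          ≤ D * ‖f‖ ^ 2 * T := by
        have himg : ∑ k ∈ ((Icc 1 n).erase j).filter (· < j), g (Nat.dist j k)
            = ∑ i ∈ (((Icc 1 n).erase j).filter (· < j)).image (Nat.dist j), g i := by
          rw [Finset.sum_image]
          intro a ha b hb hab
          obtain ⟨_, haj⟩ := Finset.mem_filter.mp ha
          obtain ⟨_, hbj⟩ := Finset.mem_filter.mp hb
          rw [Nat.dist_eq_sub_of_le_right haj.le, Nat.dist_eq_sub_of_le_right hbj.le] at hab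
          omega
        rw [himg]
        refine le_trans (Finset.sum_le_sum_of_subset_of_nonneg ?_ fun i _ _ => hgnn i) hsum_g
        intro i hi
        obtain ⟨k, hk, rfl⟩ := Finset.mem_image.mp hi
        obtain ⟨hk1, hkj⟩ := Finset.mem_filter.mp hk
        obtain ⟨hk1', _⟩ := Finset.mem_Icc.mp (Finset.mem_of_mem_erase hk1)
        rw [Nat.dist_eq_sub_of_le_right hkj.le]
        exact Finset.mem_Icc.mpr ⟨by omega, by omega⟩
      have hC : ∑ k ∈ ((Icc 1 n).erase j).filter (¬ · < j), g (Nat.dist j k)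
          ≤ D * ‖f‖ ^ 2 * T := by
        have himg : ∑ k ∈ ((Icc 1 n).erase j).filter (¬ · < j), g (Nat.dist j k)
            = ∑ i ∈ (((Icc 1 n).erase j).filter (¬ · < j)).image (Nat.dist j), g i := by
          rw [Finset.sum_image]
          intro a ha b hb hab
          obtain ⟨ha', haj⟩ := Finset.mem_filter.mp ha
          obtain ⟨hb', hbj⟩ := Finset.mem_filter.mp hb
          have haj' : j ≤ a := not_lt.mp haj
          have hbj' : j ≤ b := not_lt.mp hbj
          rw [Nat.dist_eq_sub_of_le haj', Nat.dist_eq_sub_of_le hbj'] at hab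
          omega
        rw [himg]
        refine le_trans (Finset.sum_le_sum_of_subset_of_nonneg ?_ fun i _ _ => hgnn i) hsum_g
        intro i hi
        obtain ⟨k, hk, rfl⟩ := Finset.mem_image.mp hi
        obtain ⟨hk1, hkj⟩ := Finset.mem_filter.mp hk
        have hkne : k ≠ j := Finset.ne_of_mem_erase hk1
        obtain ⟨_, hkn⟩ := Finset.mem_Icc.mp (Finset.mem_of_mem_erase hk1)
        have : j ≤ k := not_lt.mp hkj
        rw [Nat.dist_eq_sub_of_le this]
        exact Finset.mem_Icc.mpr ⟨by omega, by omega⟩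
      linarith
    linarith
  -- norm-squared of the sum
  have hS : ‖∑ j ∈ Icc 1 n, (U ^ j) f‖ ^ 2
      ≤ ∑ j ∈ Icc 1 n, ∑ k ∈ Icc 1 n, g (Nat.dist j k) := by
    rw [← inner_self_eq_norm_sq (𝕜 := ℂ)]
    rw [sum_inner]
    rw [map_sum]
    refine le_trans (Finset.sum_le_sum fun j _ => ?_) (Finset.sum_le_sum fun j _ =>
      Finset.sum_le_sum fun k (_ : k ∈ Icc 1 n) => hbound j k)
    rw [inner_sum, map_sum]
    refine Finset.sum_le_sum fun k _ => ?_
    exact (RCLike.re_le_norm _)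
  have hScard : ∑ j ∈ Icc 1 n, ∑ k ∈ Icc 1 n, g (Nat.dist j k)
      ≤ n * (‖f‖ ^ 2 + 2 * (D * ‖f‖ ^ 2 * T)) := by
    calc ∑ j ∈ Icc 1 n, ∑ k ∈ Icc 1 n, g (Nat.dist j k)
        ≤ ∑ j ∈ Icc 1 n, (‖f‖ ^ 2 + 2 * (D * ‖f‖ ^ 2 * T)) :=
          Finset.sum_le_sum hrow
      _ = n * (‖f‖ ^ 2 + 2 * (D * ‖f‖ ^ 2 * T)) := by
          rw [Finset.sum_const, Nat.card_Icc]
          simp [nsmul_eq_mul]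
          ring
  -- put it together
  have hnormsmul : ‖(n : ℂ)⁻¹ • ∑ j ∈ Icc 1 n, (U ^ j) f‖ ^ 2
      = ((n : ℝ)⁻¹) ^ 2 * ‖∑ j ∈ Icc 1 n, (U ^ j) f‖ ^ 2 := by
    rw [norm_smul, mul_pow]
    congr 1
    rw [norm_inv, Complex.norm_natCast]
  rw [hnormsmul]
  have hfinal : ((n : ℝ)⁻¹) ^ 2 * ‖∑ j ∈ Icc 1 n, (U ^ j) f‖ ^ 2
      ≤ ((n : ℝ)⁻¹) ^ 2 * (n * (‖f‖ ^ 2 + 2 * (D * ‖f‖ ^ 2 * T))) :=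
    mul_le_mul_of_nonneg_left (le_trans hS hScard) (by positivity)
  refine le_trans hfinal ?_
  have h2 : ((n : ℝ)⁻¹) ^ 2 * (n * (‖f‖ ^ 2 + 2 * (D * ‖f‖ ^ 2 * T)))
      = (1 / n) * (‖f‖ ^ 2 + 2 * (D * ‖f‖ ^ 2 * T)) := by
    field_simp
  rw [h2]
  have h3 : ‖f‖ ^ 2 + 2 * (D * ‖f‖ ^ 2 * T) ≤ 2 * ‖f‖ ^ 2 * (1 + D * T) := by
    nlinarith [sq_nonneg ‖f‖]
  calc (1 / (n:ℝ)) * (‖f‖ ^ 2 + 2 * (D * ‖f‖ ^ 2 * T))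
      ≤ (1 / (n:ℝ)) * (2 * ‖f‖ ^ 2 * (1 + D * T)) := by
        exact mul_le_mul_of_nonneg_left h3 (by positivity)
    _ = (2 / (n : ℝ)) * ‖f‖ ^ 2 * (1 + D * T) := by ring
end

section
/- Let (X,μ) be a probability space with a measure-preserving Z-action n ↦ gₙ, and let B₁ ⊇ B₂ ⊇ ⋯ be measurable. Set Eₙ = gₙ^{-1}(Bₙ). Suppose there are constants D > 0, σ > 0 such that |μ(Eₘ ∩ Eₙ) − μ(Eₘ)μ(Eₙ)| ≤ D√(μ(Bₘ)μ(Bₙ))·|n−m|·e^{−|n−m|σ} whenever m ≠ n. Then for all N ≥ M ≥ 1, ∑_{m,n=M}^{N} (μ(Eₘ∩Eₙ) − μ(Eₘ)μ(Eₙ)) ≤ (1 + 2D∑_{i=1}^{∞} i e^{−iσ}) · ∑_{n=M}^{N} μ(Bₙ). -/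
open MeasureTheory

theorem stmt_8 {X : Type*} [MeasurableSpace X] (μ : Measure X) [IsProbabilityMeasure μ]
    (g : ℕ → X → X) (hg : ∀ n, MeasurePreserving (g n) μ μ)
    (B : ℕ → Set X) (hBm : ∀ n, MeasurableSet (B n)) (hBnest : Antitone B)
    (D σ : ℝ) (hD : 0 < D) (hσ : 0 < σ)
    (E : ℕ → Set X) (hE : ∀ n, E n = g n ⁻¹' (B n))
    (hcorr : ∀ m n : ℕ, m ≠ n →
      |(μ (E m ∩ E n)).toReal - (μ (E m)).toReal * (μ (E n)).toReal|
        ≤ D * Real.sqrt ((μ (B m)).toReal * (μ (B n)).toReal) *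
            (|(n : ℝ) - (m : ℝ)| * Real.exp (-|(n : ℝ) - (m : ℝ)| * σ))) :
    ∀ M N : ℕ, 1 ≤ M → M ≤ N →
      ∑ m ∈ Finset.Icc M N, ∑ n ∈ Finset.Icc M N,
        ((μ (E m ∩ E n)).toReal - (μ (E m)).toReal * (μ (E n)).toReal)
      ≤ (1 + 2 * D * ∑' i : ℕ, (i : ℝ) * Real.exp (-(i : ℝ) * σ)) *
          ∑ n ∈ Finset.Icc M N, (μ (B n)).toReal := by
  intro M N hM hMN
  set I := Finset.Icc M N with hI
  set b : ℕ → ℝ := fun n => (μ (B n)).toReal with hb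
  set f : ℕ → ℕ → ℝ :=
    fun m n => (μ (E m ∩ E n)).toReal - (μ (E m)).toReal * (μ (E n)).toReal with hf
  set w : ℕ → ℝ := fun i => (i : ℝ) * Real.exp (-(i : ℝ) * σ) with hw
  have hw0 : ∀ i, 0 ≤ w i := fun i =>
    mul_nonneg (Nat.cast_nonneg i) (Real.exp_pos _).le
  have hwsum : Summable w := by
    have h1 : ‖Real.exp (-σ)‖ < 1 := by
      rw [Real.norm_eq_abs, abs_of_pos (Real.exp_pos _)]
      exact Real.exp_lt_one_iff.2 (neg_neg_iff_pos.2 hσ)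
    have := summable_pow_mul_geometric_of_norm_lt_one (R := ℝ) 1 h1
    refine this.congr fun i => ?_
    simp [hw, ← Real.exp_nat_mul, pow_one]
  set S : ℝ := ∑' i : ℕ, w i with hS
  have hS0 : 0 ≤ S := tsum_nonneg hw0
  have hb0 : ∀ n, 0 ≤ b n := fun n => ENNReal.toReal_nonneg
  have hbmono : ∀ m n : ℕ, m ≤ n → b n ≤ b m := by
    intro m n hmn
    exact ENNReal.toReal_mono (measure_ne_top μ _) (measure_mono (hBnest hmn))
  have hEB : ∀ n, (μ (E n)).toReal = b n := by
    intro n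
    rw [hE n, (hg n).measure_preimage (hBm n).nullMeasurableSet]
  -- the inner sum bound
  have hinner : ∀ m : ℕ, ∑ n ∈ I.filter (fun n => m < n), w (n - m) ≤ S := by
    intro m
    have himg : ∑ n ∈ I.filter (fun n => m < n), w (n - m)
        = ∑ i ∈ (I.filter (fun n => m < n)).image (fun n => n - m), w i := by
      rw [Finset.sum_image]
      intro x hx y hy hxy
      simp only [Finset.mem_coe, Finset.mem_filter] at hx hy hxy
      omega
    rw [himg]
    exact Summable.sum_le_tsum _ (fun i _ => hw0 i) hwsum
  -- off-diagonal key bound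
  have hkey : ∀ m n : ℕ, m < n → f m n ≤ D * (b m * w (n - m)) ∧
      f n m ≤ D * (b m * w (n - m)) := by
    intro m n hmn
    have hcast : |(n : ℝ) - (m : ℝ)| = ((n - m : ℕ) : ℝ) := by
      have h0 : (m:ℝ) ≤ (n:ℝ) := Nat.cast_le.2 hmn.le
      rw [abs_of_nonneg (sub_nonneg.2 h0), Nat.cast_sub hmn.le]
    have hsqrt : Real.sqrt (b m * b n) ≤ b m := by
      calc Real.sqrt (b m * b n) ≤ Real.sqrt (b m * b m) :=
            Real.sqrt_le_sqrt (mul_le_mul_of_nonneg_left (hbmono m n hmn.le) (hb0 m))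
        _ = b m := Real.sqrt_mul_self (hb0 m)
    have hmain : ∀ p q : ℕ, p ≠ q → |(p:ℝ) - (q:ℝ)| = ((n - m : ℕ) : ℝ) →
        Real.sqrt ((μ (B q)).toReal * (μ (B p)).toReal) ≤ b m →
        f q p ≤ D * (b m * w (n - m)) := by
      intro p q hpq hc hs
      have h := hcorr q p hpq.symm
      rw [hc] at h
      calc f q p ≤ |f q p| := le_abs_self _
        _ ≤ D * Real.sqrt ((μ (B q)).toReal * (μ (B p)).toReal) *
            (((n - m : ℕ) : ℝ) * Real.exp (-((n - m : ℕ) : ℝ) * σ)) := h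
        _ ≤ D * b m * w (n - m) := by
            apply mul_le_mul_of_nonneg_right _ (hw0 (n - m))
            exact mul_le_mul_of_nonneg_left hs hD.le
        _ = D * (b m * w (n - m)) := by ring
    constructor
    · exact hmain n m (by omega) hcast hsqrt
    · refine hmain m n (by omega) ?_ ?_
      · rw [abs_sub_comm]; exact hcast
      · rwa [mul_comm]
  -- diagonal bound
  have hdiag : ∀ m, f m m ≤ b m := by
    intro m
    have : f m m = (μ (E m)).toReal - (μ (E m)).toReal * (μ (E m)).toReal := by
      simp [hf, Set.inter_self]
    rw [this, hEB m]
    nlinarith [hb0 m, mul_self_nonneg (b m)]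
  -- splitting the inner sum
  have hsplit : ∀ m ∈ I, ∑ n ∈ I, f m n =
      f m m + ∑ n ∈ I.filter (fun n => m < n), f m n
        + ∑ n ∈ I.filter (fun n => n < m), f m n := by
    intro m hm
    rw [← Finset.sum_filter_add_sum_filter_not I (fun n => n < m) (f m)]
    have hset : I.filter (fun n => ¬ n < m) = insert m (I.filter (fun n => m < n)) := by
      ext x
      simp only [Finset.mem_filter, Finset.mem_insert, hI, Finset.mem_Icc] at *
      omega
    rw [hset, Finset.sum_insert (by simp [Finset.mem_filter])]
    ring
  have hsum_split : ∑ m ∈ I, ∑ n ∈ I, f m n =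
      (∑ m ∈ I, f m m) + (∑ m ∈ I, ∑ n ∈ I.filter (fun n => m < n), f m n)
        + (∑ m ∈ I, ∑ n ∈ I.filter (fun n => n < m), f m n) := by
    rw [← Finset.sum_add_distrib, ← Finset.sum_add_distrib]
    exact Finset.sum_congr rfl hsplit
  -- bound A: sum over m < n
  have hA : ∑ m ∈ I, ∑ n ∈ I.filter (fun n => m < n), f m n ≤ D * S * ∑ m ∈ I, b m := by
    rw [Finset.mul_sum]
    refine Finset.sum_le_sum fun m _ => ?_
    calc ∑ n ∈ I.filter (fun n => m < n), f m n
        ≤ ∑ n ∈ I.filter (fun n => m < n), D * (b m * w (n - m)) := by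
          refine Finset.sum_le_sum fun n hn => ?_
          exact (hkey m n (Finset.mem_filter.1 hn).2).1
      _ = D * b m * ∑ n ∈ I.filter (fun n => m < n), w (n - m) := by
          rw [Finset.mul_sum]; apply Finset.sum_congr rfl; intros; ring
      _ ≤ D * b m * S := by
          exact mul_le_mul_of_nonneg_left (hinner m) (mul_nonneg hD.le (hb0 m))
      _ = D * S * b m := by ring
  -- bound C: sum over n < m, via swapping
  have hC : ∑ m ∈ I, ∑ n ∈ I.filter (fun n => n < m), f m n ≤ D * S * ∑ m ∈ I, b m := by
    have hswap : ∑ m ∈ I, ∑ n ∈ I.filter (fun n => n < m), f m n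
        = ∑ n ∈ I, ∑ m ∈ I.filter (fun m => n < m), f m n := by
      refine Finset.sum_comm' fun m n => ?_
      simp only [Finset.mem_filter]
      tauto
    rw [hswap, Finset.mul_sum]
    refine Finset.sum_le_sum fun n _ => ?_
    calc ∑ m ∈ I.filter (fun m => n < m), f m n
        ≤ ∑ m ∈ I.filter (fun m => n < m), D * (b n * w (m - n)) := by
          refine Finset.sum_le_sum fun m hm => ?_
          exact (hkey n m (Finset.mem_filter.1 hm).2).2
      _ = D * b n * ∑ m ∈ I.filter (fun m => n < m), w (m - n) := by
          rw [Finset.mul_sum]; apply Finset.sum_congr rfl; intros; ring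
      _ ≤ D * b n * S := by
          exact mul_le_mul_of_nonneg_left (hinner n) (mul_nonneg hD.le (hb0 n))
      _ = D * S * b n := by ring
  have hdiagsum : ∑ m ∈ I, f m m ≤ ∑ m ∈ I, b m :=
    Finset.sum_le_sum fun m _ => hdiag m
  calc ∑ m ∈ I, ∑ n ∈ I, f m n
      ≤ (∑ m ∈ I, b m) + D * S * ∑ m ∈ I, b m + D * S * ∑ m ∈ I, b m := by
        rw [hsum_split]
        exact add_le_add (add_le_add hdiagsum hA) hC
    _ = (1 + 2 * D * S) * ∑ n ∈ I, b n := by ring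
end

section
/- Let (X,μ) be a probability space with measure-preserving maps gₙ, and B₁ ⊇ B₂ ⊇ ⋯ measurable. Suppose there is a constant C > 0 such that μ(W_{m,n}) ≤ C/(m·μ(Bₙ)) for all m,n ≥ 1, where W_{m,n} = {x : gᵢ(x) ∉ Bₙ for 1 ≤ i ≤ m}. If there is an increasing sequence (n_j) in ℕ with ∑_j 1/(n_j·μ(B_{n_{j+1}})) < ∞, then the set of x ∈ X such that {g₁x,…,gₙx} ∩ Bₙ ≠ ∅ for all sufficiently large n has full μ-measure. -/
open MeasureTheory Filter

theorem stmt_10 {X : Type*} [MeasurableSpace X] (μ : Measure X) [IsProbabilityMeasure μ]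
    (g : ℕ → X → X) (hg : ∀ n, MeasurePreserving (g n) μ μ)
    (B : ℕ → Set X) (hBm : ∀ n, MeasurableSet (B n)) (hBnest : Antitone B)
    (C : ℝ) (hC : 0 < C)
    (hW : ∀ m n : ℕ, 1 ≤ m → 1 ≤ n →
      (μ {x | ∀ i, 1 ≤ i → i ≤ m → g i x ∉ B n}).toReal
        ≤ C / ((m : ℝ) * (μ (B n)).toReal))
    (nseq : ℕ → ℕ) (hmono : StrictMono nseq) (h1 : 1 ≤ nseq 0)
    (hsum : Summable (fun j : ℕ => 1 / ((nseq j : ℝ) * (μ (B (nseq (j + 1)))).toReal))) :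
    μ {x | ∀ᶠ n in atTop, ∃ i, 1 ≤ i ∧ i ≤ n ∧ g i x ∈ B n} = 1 := by
  set W : ℕ → ℕ → Set X := fun m n => {x | ∀ i, 1 ≤ i → i ≤ m → g i x ∉ B n} with hWdef
  set s : ℕ → Set X := fun j => W (nseq j) (nseq (j + 1)) with hsdef
  have hWmeas : ∀ m n, MeasurableSet (W m n) := by
    intro m n
    have : W m n = ⋂ i, ⋂ (_ : 1 ≤ i), ⋂ (_ : i ≤ m), (g i)⁻¹' (B n)ᶜ := by
      ext x; simp [hWdef, Set.mem_iInter]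
    rw [this]
    exact MeasurableSet.iInter fun i => MeasurableSet.iInter fun _ =>
      MeasurableSet.iInter fun _ => (hg i).measurable (hBm n).compl
  -- tsum of measures is finite
  have hone : ∀ j : ℕ, 1 ≤ nseq j := fun j => le_trans h1 (hmono.monotone (Nat.zero_le j))
  have hbound : ∀ j : ℕ, μ (s j) ≤
      ENNReal.ofReal (C * (1 / ((nseq j : ℝ) * (μ (B (nseq (j + 1)))).toReal))) := by
    intro j
    have h := hW (nseq j) (nseq (j + 1)) (hone j) (hone (j + 1))
    have hfin : μ (s j) ≠ ⊤ := measure_ne_top μ _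
    rw [← ENNReal.ofReal_toReal hfin]
    apply ENNReal.ofReal_le_ofReal
    calc (μ (s j)).toReal ≤ C / ((nseq j : ℝ) * (μ (B (nseq (j + 1)))).toReal) := h
      _ = C * (1 / ((nseq j : ℝ) * (μ (B (nseq (j + 1)))).toReal)) := by
        rw [mul_one_div]
  have hsum2 : Summable (fun j : ℕ => C * (1 / ((nseq j : ℝ) * (μ (B (nseq (j + 1)))).toReal))) :=
    hsum.mul_left C
  have hnonneg : ∀ j : ℕ, 0 ≤ C * (1 / ((nseq j : ℝ) * (μ (B (nseq (j + 1)))).toReal)) := by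
    intro j
    apply mul_nonneg hC.le
    apply one_div_nonneg.2
    positivity
  have htsum : ∑' j, μ (s j) ≠ ⊤ := by
    apply ne_top_of_le_ne_top (b := ∑' j, ENNReal.ofReal
      (C * (1 / ((nseq j : ℝ) * (μ (B (nseq (j + 1)))).toReal))))
    · rw [← ENNReal.ofReal_tsum_of_nonneg hnonneg hsum2]
      exact ENNReal.ofReal_ne_top
    · exact ENNReal.tsum_le_tsum hbound
  have hlimsup : μ (limsup s atTop) = 0 := measure_limsup_atTop_eq_zero htsum
  -- the inclusion
  set A : Set X := {x | ∀ᶠ n in atTop, ∃ i, 1 ≤ i ∧ i ≤ n ∧ g i x ∈ B n} with hAdef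
  have hsub : Aᶜ ⊆ limsup s atTop := by
    intro x hx
    rw [mem_limsup_iff_frequently_mem, frequently_atTop]
    intro k
    have hx' : ∃ᶠ n in atTop, x ∈ W n n := by
      rw [Set.mem_compl_iff, hAdef, Set.mem_setOf_eq, not_eventually] at hx
      apply hx.mono
      intro n hn
      intro i hi1 hi2 hmem
      exact hn ⟨i, hi1, hi2, hmem⟩
    obtain ⟨n, hn1, hn2⟩ := (frequently_atTop.1 hx') (nseq (k + 1))
    -- find j with nseq j ≤ n < nseq (j+1) and j ≥ k
    classical
    set P : ℕ → Prop := fun j => nseq j ≤ n with hPdef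
    set j := Nat.findGreatest P n with hjdef
    have hk1n : k + 1 ≤ n := le_trans (hmono.le_apply) hn1
    have hPk1 : P (k + 1) := hn1
    have hPj : P j := Nat.findGreatest_spec hk1n hPk1
    have hjk : k + 1 ≤ j := Nat.le_findGreatest hk1n hPk1
    have hnlt : n < nseq (j + 1) := by
      by_contra h
      push_neg at h
      exact Nat.findGreatest_is_greatest (Nat.lt_succ_self j)
        (le_trans hmono.le_apply h) h
    refine ⟨j, le_trans (Nat.le_succ k) hjk, ?_⟩
    intro i hi1 hi2
    have : g i x ∉ B n := hn2 i hi1 (le_trans hi2 hPj)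
    exact fun hmem => this (hBnest hnlt.le hmem)
  have hAc : μ Aᶜ = 0 := le_antisymm (hlimsup ▸ measure_mono hsub) zero_le
  have hmeaslim : MeasurableSet (limsup s atTop) :=
    MeasurableSet.measurableSet_limsup fun j => hWmeas _ _
  have : μ ((limsup s atTop)ᶜ) ≤ μ A := measure_mono (Set.compl_subset_comm.1 hsub)
  rw [measure_compl hmeaslim (measure_ne_top μ _), hlimsup, measure_univ] at this
  simpa using le_antisymm (prob_le_one) (by simpa using this)
end
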